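/- Let ρ be a positive definite operator on a finite-dimensional Hilbert space, and |ψ₁⟩, |ψ₂⟩ vectors with ⟨ψ₁|ρ⁻¹|ψ₁⟩⟨ψ₂|ρ⁻¹|ψ₂⟩ > |⟨ψ₁|ρ⁻¹|ψ₂⟩|² (set D equal to this difference). With Λ₁ = (⟨ψ₂|ρ⁻¹|ψ₂⟩ − |⟨ψ₁|ρ⁻¹|ψ₂⟩|)/D and Λ₂ = (⟨ψ₁|ρ⁻¹|ψ₁⟩ − |⟨ψ₂|ρ⁻¹|ψ₁⟩|)/D, the operator ρ − Λ₁|ψ₁⟩⟨ψ₁| − Λ₂|ψ₂⟩⟨ψ₂| is positive semidefinite. -/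

import Mathlib

open Matrix ComplexOrder

noncomputable section

/-- The rank-one operator `|ψ⟩⟨ψ|` as a matrix. -/
def outer {n : Type*} [Fintype n] (ψ : n → ℂ) : Matrix n n ℂ :=
  Matrix.vecMulVec ψ (star ψ)

lemma outer_mulVec {n : Type*} [Fintype n] (ψ x : n → ℂ) :
    outer ψ *ᵥ x = (star ψ ⬝ᵥ x) • ψ := by
  ext i
  simp only [outer, vecMulVec, mulVec, dotProduct, Pi.smul_apply, smul_eq_mul, of_apply,
    Pi.star_apply]
  rw [Finset.sum_mul]
  exact Finset.sum_congr rfl fun j _ => by ring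

lemma outer_isHermitian {n : Type*} [Fintype n] (ψ : n → ℂ) :
    (outer ψ).IsHermitian := by
  ext i j
  simp [outer, vecMulVec_apply, conjTranspose_apply, mul_comm]

lemma star_of_nonneg {z : ℂ} (h : 0 ≤ z) : star z = z := by
  obtain ⟨h1, h2⟩ := Complex.nonneg_iff.mp h
  exact Complex.ext rfl (by simp [Complex.star_def, ← h2])

lemma eq_re_of_nonneg {z : ℂ} (h : 0 ≤ z) : z = (z.re : ℂ) := by
  obtain ⟨h1, h2⟩ := Complex.nonneg_iff.mp h
  exact Complex.ext rfl (by simp [← h2])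

lemma star_dot {n : Type*} [Fintype n] (u v : n → ℂ) :
    star (star u ⬝ᵥ v) = star v ⬝ᵥ u := by
  simp [dotProduct, mul_comm]

/-- Case (d) of the pair-maximality lemma: with
`D = ⟨ψ₁|ρ⁻¹|ψ₁⟩⟨ψ₂|ρ⁻¹|ψ₂⟩ − |⟨ψ₁|ρ⁻¹|ψ₂⟩|² > 0` and
`Λ₁ = (⟨ψ₂|ρ⁻¹|ψ₂⟩ − |⟨ψ₁|ρ⁻¹|ψ₂⟩|)/D`, `Λ₂ = (⟨ψ₁|ρ⁻¹|ψ₁⟩ − |⟨ψ₂|ρ⁻¹|ψ₁⟩|)/D`,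
the operator `ρ − Λ₁|ψ₁⟩⟨ψ₁| − Λ₂|ψ₂⟩⟨ψ₂|` is positive semidefinite. -/
theorem stmt3 {n : Type*} [Fintype n] [DecidableEq n]
    (ρ : Matrix n n ℂ) (hρ : ρ.PosDef) (ψ₁ ψ₂ : n → ℂ)
    (d₁ d₂ d₁₂ D Λ₁ Λ₂ : ℝ)
    (hd₁ : d₁ = (star ψ₁ ⬝ᵥ (ρ⁻¹ *ᵥ ψ₁)).re)
    (hd₂ : d₂ = (star ψ₂ ⬝ᵥ (ρ⁻¹ *ᵥ ψ₂)).re)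
    (hd₁₂ : d₁₂ = ‖star ψ₁ ⬝ᵥ (ρ⁻¹ *ᵥ ψ₂)‖)
    (hD : D = d₁ * d₂ - d₁₂ ^ 2) (hDpos : 0 < D)
    (hΛ₁ : Λ₁ = (d₂ - d₁₂) / D) (hΛ₂ : Λ₂ = (d₁ - d₁₂) / D) :
    (ρ - (Λ₁ : ℂ) • outer ψ₁ - (Λ₂ : ℂ) • outer ψ₂).PosSemidef := by
  have hρH := hρ.isHermitian
  have hinv : ρ⁻¹.PosDef := hρ.inv
  have hinvH := hinv.isHermitian
  have hdet : IsUnit ρ.det := hρ.det_pos.ne'.isUnit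
  have hmulinv : ρ * ρ⁻¹ = 1 := mul_nonsing_inv ρ hdet
  have hinvmul : ρ⁻¹ * ρ = 1 := nonsing_inv_mul ρ hdet
  have hD0 : (D : ℂ) ≠ 0 := by exact_mod_cast hDpos.ne'
  have hd₁₂0 : 0 ≤ d₁₂ := hd₁₂ ▸ norm_nonneg _
  refine posSemidef_iff_dotProduct_mulVec.mpr ⟨?_, fun x => ?_⟩
  · refine (hρH.sub ?_).sub ?_ <;>
    · rw [Matrix.IsHermitian, conjTranspose_smul, (outer_isHermitian _).eq,
        Complex.star_def, Complex.conj_ofReal]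
  · 
    set c₁ : ℂ := star ψ₁ ⬝ᵥ x with hc₁
    set c₂ : ℂ := star ψ₂ ⬝ᵥ x with hc₂
    set g : ℂ := star ψ₁ ⬝ᵥ (ρ⁻¹ *ᵥ ψ₂) with hg
    have cd1 : star ψ₁ ⬝ᵥ (ρ⁻¹ *ᵥ ψ₁) = (d₁ : ℂ) := by
      rw [hd₁]; exact eq_re_of_nonneg (hinv.posSemidef.dotProduct_mulVec_nonneg ψ₁)
    have cd2 : star ψ₂ ⬝ᵥ (ρ⁻¹ *ᵥ ψ₂) = (d₂ : ℂ) := by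
      rw [hd₂]; exact eq_re_of_nonneg (hinv.posSemidef.dotProduct_mulVec_nonneg ψ₂)
    have hgstar : star ψ₂ ⬝ᵥ (ρ⁻¹ *ᵥ ψ₁) = star g := by
      have h := star_dot ψ₁ (ρ⁻¹ *ᵥ ψ₂)
      rw [star_mulVec, hinvH.eq, ← dotProduct_mulVec] at h
      exact h.symm
    have hgg : g * (starRingEnd ℂ) g = ((d₁₂ : ℂ)) ^ 2 := by
      have h2 : (d₁₂ : ℝ) ^ 2 = Complex.normSq g := by rw [hd₁₂, Complex.sq_norm]
      rw [Complex.mul_conj, ← h2]; push_cast; ring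
    set a₁ : ℂ := ((d₂ : ℂ) * c₁ - g * c₂) / (D : ℂ) with ha₁
    set a₂ : ℂ := ((d₁ : ℂ) * c₂ - star g * c₁) / (D : ℂ) with ha₂
    set y : n → ℂ := a₁ • ψ₁ + a₂ • ψ₂ with hy
    have hDc : (D : ℂ) = (d₁ : ℂ) * (d₂ : ℂ) - ((d₁₂ : ℂ)) ^ 2 := by
      rw [hD]; push_cast; ring
    have hylin : ∀ u : n → ℂ, u ⬝ᵥ (ρ⁻¹ *ᵥ y) =
        a₁ * (u ⬝ᵥ (ρ⁻¹ *ᵥ ψ₁)) + a₂ * (u ⬝ᵥ (ρ⁻¹ *ᵥ ψ₂)) := by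
      intro u
      rw [hy, mulVec_add, mulVec_smul, mulVec_smul, dotProduct_add, dotProduct_smul,
        dotProduct_smul, smul_eq_mul, smul_eq_mul]
    have hy1 : star ψ₁ ⬝ᵥ (ρ⁻¹ *ᵥ y) = c₁ := by
      rw [hylin, cd1, ← hg, ha₁, ha₂]
      simp only [Complex.star_def]
      field_simp
      linear_combination (-c₁) * hgg - c₁ * hDc
    have hy2 : star ψ₂ ⬝ᵥ (ρ⁻¹ *ᵥ y) = c₂ := by
      rw [hylin, cd2, hgstar, ha₁, ha₂]
      simp only [Complex.star_def]
      field_simp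
      linear_combination (-c₂) * hgg - c₂ * hDc
    set K : ℂ := star a₁ * c₁ + star a₂ * c₂ with hK
    have hystar : star y = star a₁ • star ψ₁ + star a₂ • star ψ₂ := by
      rw [hy]; simp [star_add, star_smul]
    have hS : star y ⬝ᵥ (ρ⁻¹ *ᵥ y) = K := by
      rw [hystar, add_dotProduct, smul_dotProduct, smul_dotProduct, smul_eq_mul, smul_eq_mul,
        hy1, hy2, hK]
    have hyx : star y ⬝ᵥ x = K := by
      rw [hystar, add_dotProduct, smul_dotProduct, smul_dotProduct, smul_eq_mul, smul_eq_mul,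
        ← hc₁, ← hc₂, hK]
    have hK0 : 0 ≤ K := hS ▸ hinv.posSemidef.dotProduct_mulVec_nonneg y
    have hxy : star x ⬝ᵥ y = K := by
      have h1 : star x ⬝ᵥ ψ₁ = star c₁ := by rw [hc₁]; exact (star_dot ψ₁ x).symm
      have h2 : star x ⬝ᵥ ψ₂ = star c₂ := by rw [hc₂]; exact (star_dot ψ₂ x).symm
      rw [hy, dotProduct_add, dotProduct_smul, dotProduct_smul, smul_eq_mul, smul_eq_mul,
        h1, h2, ← star_of_nonneg hK0, hK]
      simp only [star_add, star_mul', star_star]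
    set w : n → ℂ := ρ⁻¹ *ᵥ y with hw
    have hz0 : 0 ≤ star (x - w) ⬝ᵥ (ρ *ᵥ (x - w)) := hρ.posSemidef.dotProduct_mulVec_nonneg _
    have hzeq : star (x - w) ⬝ᵥ (ρ *ᵥ (x - w)) = star x ⬝ᵥ (ρ *ᵥ x) - K := by
      have h1 : ρ *ᵥ w = y := by rw [hw, mulVec_mulVec, hmulinv, one_mulVec]
      have h2 : ∀ v, star w ⬝ᵥ v = star y ⬝ᵥ (ρ⁻¹ *ᵥ v) := by
        intro v; rw [hw, star_mulVec, hinvH.eq, ← dotProduct_mulVec]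
      rw [star_sub, sub_dotProduct, mulVec_sub, dotProduct_sub, dotProduct_sub, h1, h2, h2,
        mulVec_mulVec, hinvmul, one_mulVec, hxy, hyx, hS]
      ring
    set r₁ := ‖c₁‖ with hr₁
    set r₂ := ‖c₂‖ with hr₂
    set m : ℝ := (g * star c₁ * c₂).re with hm
    have e1 : c₁ * star c₁ = (r₁ : ℂ) ^ 2 := by
      rw [Complex.star_def, Complex.mul_conj, ← Complex.sq_norm]; push_cast; ring
    have e2 : c₂ * star c₂ = (r₂ : ℂ) ^ 2 := by
      rw [Complex.star_def, Complex.mul_conj, ← Complex.sq_norm]; push_cast; ring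
    have hconjprod : star (g * star c₁ * c₂) = star g * c₁ * star c₂ := by
      simp only [star_mul', star_star]
    have ecross : g * star c₁ * c₂ + star g * c₁ * star c₂ = ((2 * m : ℝ) : ℂ) := by
      rw [← hconjprod, hm, Complex.star_def, Complex.add_conj]
    have key : K - (Λ₁ : ℂ) * (c₁ * star c₁) - (Λ₂ : ℂ) * (c₂ * star c₂)
        = (((d₁₂ * r₁ ^ 2 + d₁₂ * r₂ ^ 2 - 2 * m) / D : ℝ) : ℂ) := by
      rw [hK, ha₁, ha₂, hΛ₁, hΛ₂]
      simp only [Complex.star_def] at e1 e2 ecross ⊢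
      simp only [map_div₀, map_sub, _root_.map_mul, Complex.conj_ofReal, Complex.conj_conj]
      push_cast at ecross ⊢
      field_simp
      linear_combination ((d₁₂ : ℂ)) * e1 + ((d₁₂ : ℂ)) * e2 - ecross
    have hT : 0 ≤ K - (Λ₁ : ℂ) * (c₁ * star c₁) - (Λ₂ : ℂ) * (c₂ * star c₂) := by
      rw [key, Complex.zero_le_real]
      have hm' : m ≤ d₁₂ * r₁ * r₂ := by
        have h1 : m ≤ ‖g * star c₁ * c₂‖ := hm ▸ Complex.re_le_norm _
        have h2 : ‖g * star c₁ * c₂‖ = d₁₂ * r₁ * r₂ := by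
          simp only [norm_mul, Complex.star_def, Complex.norm_conj, hd₁₂, hr₁, hr₂]
        linarith
      apply div_nonneg _ hDpos.le
      nlinarith [mul_nonneg hd₁₂0 (sq_nonneg (r₁ - r₂)), hm']
    have h1x : star x ⬝ᵥ ψ₁ = star c₁ := by rw [hc₁]; exact (star_dot ψ₁ x).symm
    have h2x : star x ⬝ᵥ ψ₂ = star c₂ := by rw [hc₂]; exact (star_dot ψ₂ x).symm
    have hgoal : star x ⬝ᵥ ((ρ - (Λ₁ : ℂ) • outer ψ₁ - (Λ₂ : ℂ) • outer ψ₂) *ᵥ x)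
        = (star (x - w) ⬝ᵥ (ρ *ᵥ (x - w)))
          + (K - (Λ₁ : ℂ) * (c₁ * star c₁) - (Λ₂ : ℂ) * (c₂ * star c₂)) := by
      rw [hzeq, sub_mulVec, sub_mulVec, dotProduct_sub, dotProduct_sub, smul_mulVec,
        smul_mulVec, outer_mulVec, outer_mulVec, dotProduct_smul, dotProduct_smul,
        dotProduct_smul, dotProduct_smul, smul_eq_mul, smul_eq_mul, smul_eq_mul, smul_eq_mul,
        ← hc₁, ← hc₂, h1x, h2x]
      ring
    rw [hgoal]
    exact add_nonneg hz0 hT
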